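/- (Rejection completeness of the derived validator, single step.) For every program p : Prog, all q, a : ℤ, and all sets v, v' of validation states with vstep_p q a v = some v': for every (vs', cs') ∈ v' and every assignment asgn' that satisfies cs', letting s' := fun k => asgn' (vs' k), there exist a validation state (vs, cs) ∈ v, a memory s : ℕ → ℤ, and an internal choice c : ℤ such that asgn' satisfies cs, vs^asgn' ≡ s, and sstep_p q c s = (a, s'). -/

import Mathlib

/-- Variables are natural numbers. -/
abbrev Var := ℕ

/-- Binary integer operations: +, −, ×, ÷ (integer division). -/
inductive Op
  | add | sub | mul | div
deriving DecidableEq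

def Op.denote : Op → ℤ → ℤ → ℤ
  | .add => (· + ·)
  | .sub => (· - ·)
  | .mul => (· * ·)
  | .div => (· / ·)

/-- Symbolic server expressions. -/
inductive SExp
  | const : ℤ → SExp
  | read : ℕ → SExp
  | bin : Op → SExp → SExp → SExp
deriving DecidableEq

/-- Evaluation of a server expression on a memory `s : ℕ → ℤ`, written `e^s`. -/
def SExp.eval (s : ℕ → ℤ) : SExp → ℤ
  | .const z => z
  | .read k => s k
  | .bin op e₁ e₂ => op.denote (e₁.eval s) (e₂.eval s)

/-- Validator expressions. -/
inductive VExp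
  | const : ℤ → VExp
  | var : Var → VExp
  | bin : Op → VExp → VExp → VExp
deriving DecidableEq

/-- Evaluation of a validator expression under an assignment, written `e^asgn`. -/
def VExp.eval (asgn : Var → ℤ) : VExp → ℤ
  | .const z => z
  | .var x => asgn x
  | .bin op e₁ e₂ => op.denote (e₁.eval asgn) (e₂.eval asgn)

/-- Symbolization `e^vs` of a server expression: replace every `read src` by `var (vs src)`. -/
def SExp.symb (vs : ℕ → Var) : SExp → VExp
  | .const z => .const z
  | .read k => .var (vs k)
  | .bin op e₁ e₂ => .bin op (e₁.symb vs) (e₂.symb vs)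

/-- Comparison operators for constraints: <, ≤, =. -/
inductive Cmp
  | lt | le | eq
deriving DecidableEq

def Cmp.holds : Cmp → ℤ → ℤ → Prop
  | .lt => (· < ·)
  | .le => (· ≤ ·)
  | .eq => (· = ·)

/-- A constraint is a triple of two validator expressions and a comparison. -/
structure Constraint where
  lhs : VExp
  cmp : Cmp
  rhs : VExp
deriving DecidableEq

/-- `asgn` satisfies the constraint set `cs`. -/
def Sat (asgn : Var → ℤ) (cs : Finset Constraint) : Prop :=
  ∀ c ∈ cs, c.cmp.holds (c.lhs.eval asgn) (c.rhs.eval asgn)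

/-- A variable occurs in a validator expression. -/
def VExp.occurs (x : Var) : VExp → Prop
  | .const _ => False
  | .var y => y = x
  | .bin _ e₁ e₂ => e₁.occurs x ∨ e₂.occurs x

/-- `x` is fresh for the constraint set `cs`: it occurs in no constraint of `cs`. -/
def FreshCs (x : Var) (cs : Finset Constraint) : Prop :=
  ∀ c ∈ cs, ¬ c.lhs.occurs x ∧ ¬ c.rhs.occurs x

/-- `x` is fresh for `vs : ℕ → Var`. -/
def FreshVs (x : Var) (vs : ℕ → Var) : Prop :=
  ∀ k : ℕ, vs k ≠ x

/-- One more than the largest variable occurring in a validator expression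
(a strict upper bound on its variables). -/
def VExp.maxVar : VExp → ℕ
  | .const _ => 0
  | .var x => x + 1
  | .bin _ e₁ e₂ => max e₁.maxVar e₂.maxVar

def Constraint.maxVar (c : Constraint) : ℕ :=
  max c.lhs.maxVar c.rhs.maxVar

/-- A validation state: a map from addresses to their representing variables
(with finite support, so that fresh variables exist), and a finite set of
constraints. -/
abbrev VState := (ℕ →₀ ℕ) × Finset Constraint

/-- A fixed variable fresh for both `vs` and `cs`. -/
def freshVar (vs : ℕ →₀ ℕ) (cs : Finset Constraint) : Var :=
  max (vs.support.sup ⇑vs) (cs.sup Constraint.maxVar) + 1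

/-- The write rule on validation states. -/
noncomputable def writeV (d : ℕ) (e : SExp) (w : VState) : VState :=
  let x := freshVar w.1 w.2
  (w.1.update d x, insert ⟨VExp.var x, Cmp.eq, e.symb w.1⟩ w.2)

/-- The havoc rule on validation states. -/
noncomputable def havocV (d : ℕ) (w : VState) : VState :=
  (w.1.update d (freshVar w.1 w.2), w.2)

/-- Programs in the `Prog` language. -/
inductive Prog
  | ret
  | write (dst : ℕ) (e : SExp) (p : Prog)
  | branch (e₁ e₂ : SExp) (p₁ p₂ : Prog)

/-- Semantics of `Prog` on integer memories. -/
def evalProg : Prog → (ℕ → ℤ) → (ℕ → ℤ)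
  | .ret, s => s
  | .write d e p, s => evalProg p (Function.update s d (e.eval s))
  | .branch e₁ e₂ p₁ p₂, s =>
      if e₁.eval s ≤ e₂.eval s then evalProg p₁ s else evalProg p₂ s

/-- The symbolic executor on validation states. -/
noncomputable def exec : Prog → VState → Finset VState
  | .ret, w => {w}
  | .write d e p, w => exec p (writeV d e w)
  | .branch e₁ e₂ p₁ p₂, w =>
      exec p₁ (w.1, insert ⟨e₁.symb w.1, Cmp.le, e₂.symb w.1⟩ w.2) ∪
      exec p₂ (w.1, insert ⟨e₂.symb w.1, Cmp.lt, e₁.symb w.1⟩ w.2)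

/-- A constraint set is solvable iff some assignment satisfies it. -/
def Solvable (cs : Finset Constraint) : Prop :=
  ∃ asgn : Var → ℤ, Sat asgn cs

/-- The step function of the server derived from program `p`:
write the choice to address 0 and the query to address 1, run `p`,
and answer with the value at address 1. -/
def sstepP (p : Prog) (q c : ℤ) (s : ℕ → ℤ) : ℤ × (ℕ → ℤ) :=
  let s₃ := evalProg p (Function.update (Function.update s 0 c) 1 q)
  (s₃ 1, s₃)

open Classical in
/-- The step function of the validator derived from program `p`. -/
noncomputable def vstepP (p : Prog) (q a : ℤ) (v : Finset VState) :
    Option (Finset VState) :=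
  let v' : Finset VState := v.biUnion (fun w =>
    let w₂ := writeV 1 (SExp.const q) (havocV 0 w)
    (exec p w₂).biUnion (fun w₃ =>
      let cs₄ := insert ⟨VExp.var (w₃.1 1), Cmp.eq, VExp.const a⟩ w₃.2
      if Solvable cs₄ then {(w₃.1, cs₄)} else ∅))
  if v' = ∅ then none else some v'

lemma symb_eval (e : SExp) (vs : ℕ → Var) (asgn : Var → ℤ) :
    (e.symb vs).eval asgn = e.eval (fun k => asgn (vs k)) := by
  induction e <;> simp [SExp.symb, SExp.eval, VExp.eval, *]

lemma update_comp (g : ℕ → ℤ) (f : ℕ → ℕ) (d : ℕ) (y : ℕ) :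
    (fun k => g ((Function.update f d y) k)) =
      Function.update (fun k => g (f k)) d (g y) := by
  funext k; by_cases h : k = d <;> simp [Function.update, h]

lemma exec_complete (p : Prog) :
    ∀ w : VState, ∀ w₃ ∈ exec p w, ∀ asgn : Var → ℤ, Sat asgn w₃.2 →
      Sat asgn w.2 ∧
      (fun k => asgn (w₃.1 k)) = evalProg p (fun k => asgn (w.1 k)) := by
  induction p with
  | ret =>
    intro w w₃ hw asgn hs
    simp only [exec, Finset.mem_singleton] at hw
    subst hw; exact ⟨hs, rfl⟩
  | write d e p ih =>
    intro w w₃ hw asgn hs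
    obtain ⟨hsat, heq⟩ := ih _ w₃ hw asgn hs
    have hx : asgn (freshVar w.1 w.2) = (e.symb w.1).eval asgn := by
      have := hsat ⟨VExp.var (freshVar w.1 w.2), Cmp.eq, e.symb w.1⟩
        (by simp [writeV])
      simpa [Cmp.holds, VExp.eval] using this
    have hsat' : Sat asgn w.2 := fun c hc => hsat c (by simp [writeV, hc])
    refine ⟨hsat', ?_⟩
    rw [heq]
    simp only [evalProg]
    congr 1
    have hcoe : ((writeV d e w).1 : ℕ → ℕ)
        = Function.update (w.1) d (freshVar w.1 w.2) := by
      simp [writeV, Finsupp.coe_update]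
    rw [hcoe, update_comp, hx, symb_eval]
  | branch e₁ e₂ p₁ p₂ ih₁ ih₂ =>
    intro w w₃ hw asgn hs
    simp only [exec, Finset.mem_union] at hw
    rcases hw with hw | hw
    · obtain ⟨hsat, heq⟩ := ih₁ _ w₃ hw asgn hs
      have hle : (e₁.eval (fun k => asgn (w.1 k))) ≤
          (e₂.eval (fun k => asgn (w.1 k))) := by
        have := hsat ⟨e₁.symb w.1, Cmp.le, e₂.symb w.1⟩ (by simp)
        simpa [Cmp.holds, symb_eval] using this
      have hsat' : Sat asgn w.2 := fun c hc => hsat c (by simp [hc])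
      refine ⟨hsat', ?_⟩
      rw [heq]; simp [evalProg, hle]
    · obtain ⟨hsat, heq⟩ := ih₂ _ w₃ hw asgn hs
      have hlt : (e₂.eval (fun k => asgn (w.1 k))) <
          (e₁.eval (fun k => asgn (w.1 k))) := by
        have := hsat ⟨e₂.symb w.1, Cmp.lt, e₁.symb w.1⟩ (by simp)
        simpa [Cmp.holds, symb_eval] using this
      have hsat' : Sat asgn w.2 := fun c hc => hsat c (by simp [hc])
      refine ⟨hsat', ?_⟩
      rw [heq]; simp [evalProg, not_le.mpr hlt]

/-- Rejection completeness of the derived validator, single step. -/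
theorem derived_validator_complete_step
    (p : Prog) (q a : ℤ) (v v' : Finset VState)
    (hv : vstepP p q a v = some v') :
    ∀ w' ∈ v', ∀ asgn' : Var → ℤ, Sat asgn' w'.2 →
      ∃ w ∈ v, ∃ (s : ℕ → ℤ) (c : ℤ),
        Sat asgn' w.2 ∧ (∀ k : ℕ, asgn' (w.1 k) = s k) ∧
        sstepP p q c s = (a, fun k => asgn' (w'.1 k)) := by
  intro w' hw' asgn' hsat'
  unfold vstepP at hv
  simp only at hv
  split at hv
  · exact absurd hv (by simp)
  · rw [Option.some_inj] at hv
    subst hv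
    rw [Finset.mem_biUnion] at hw'
    obtain ⟨w, hwv, hmem⟩ := hw'
    simp only [Finset.mem_biUnion] at hmem
    obtain ⟨w₃, hw₃, hmem⟩ := hmem
    split at hmem
    · rw [Finset.mem_singleton] at hmem
      subst hmem
      -- asgn' satisfies cs₄
      have hsat₃ : Sat asgn' w₃.2 := fun c hc => hsat' c (by simp [hc])
      have ha : asgn' (w₃.1 1) = a := by
        have := hsat' ⟨VExp.var (w₃.1 1), Cmp.eq, VExp.const a⟩ (by simp)
        simpa [Cmp.holds, VExp.eval] using this
      obtain ⟨hsat₂, heq⟩ := exec_complete p _ w₃ hw₃ asgn' hsat₃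
      set x₁ := freshVar w.1 w.2 with hx₁
      set w₁ := havocV 0 w with hw₁
      set x₂ := freshVar w₁.1 w₁.2 with hx₂
      have hq : asgn' x₂ = q := by
        have := hsat₂ ⟨VExp.var x₂, Cmp.eq, (SExp.const q).symb w₁.1⟩
          (by simp [writeV]; exact Or.inl rfl)
        simpa [Cmp.holds, VExp.eval, SExp.symb] using this
      have hsatw : Sat asgn' w.2 := by
        intro c hc
        exact hsat₂ c (by simp only [writeV, Finset.mem_insert]; exact Or.inr hc)
      refine ⟨w, hwv, fun k => asgn' (w.1 k), asgn' x₁, hsatw,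
        fun k => rfl, ?_⟩
      have hcoe : (((writeV 1 (SExp.const q) (havocV 0 w)).1) : ℕ → ℕ)
          = Function.update (Function.update (w.1) 0 x₁) 1 x₂ := by
        simp [writeV, havocV, Finsupp.coe_update, hx₂, hw₁, hx₁]
      have hmemeq : (fun k => asgn' (w₃.1 k)) =
          evalProg p (Function.update (Function.update
            (fun k => asgn' (w.1 k)) 0 (asgn' x₁)) 1 q) := by
        rw [heq]
        congr 1
        rw [hcoe, update_comp, update_comp, hq]
      unfold sstepP
      simp only [Prod.mk.injEq]
      exact ⟨by rw [← hmemeq]; exact ha, hmemeq.symm⟩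
    · simp at hmem
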